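/- For a standard balanced tableau R on the Rothe diagram of w, the inversion number inv(R) (the number of pairs i < j with i in a strictly higher row and a different column than j) is zero if and only if R is the super-Yamanouchi tableau, i.e., its reverse row reading word (right to left from bottom row to top row) is the identity 1, 2, ..., ℓ(w). -/
import Mathlib


/-- The Coxeter length of `w`: the number of inversion pairs. -/
def invCount {n : ℕ} (w : Equiv.Perm (Fin n)) : ℕ :=
  (Finset.univ.filter fun p : Fin n × Fin n => p.1 < p.2 ∧ w p.2 < w p.1).card

/-- The Rothe diagram of `w` (0-indexed): the cells `(i, w j)` for inversions `i < j`,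
`w j < w i`, as a subset of `ℕ × ℕ` (first coordinate the row, drawn with row `0` at the
bottom so that "above" means larger first coordinate; second coordinate the column). -/
def RotheD (n : ℕ) (w : Equiv.Perm (Fin n)) : Finset (ℕ × ℕ) :=
  (Finset.univ.filter fun p : Fin n × Fin n => p.1 < p.2 ∧ w p.2 < w p.1).image
    fun p => ((p.1 : ℕ), (w p.2 : ℕ))

/-- A standard balanced tableau on a diagram `D`: a bijective filling of the cells of `D`
by `1, …, |D|` such that for every cell, the number of larger entries to its right in its
row equals the number of smaller entries above it in its column. -/
def IsSBT (D : Finset (ℕ × ℕ)) (T : ℕ × ℕ → ℕ) : Prop :=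
  Set.InjOn T ↑D ∧ D.image T = Finset.Icc 1 D.card ∧
  ∀ x ∈ D, (D.filter fun y => y.1 = x.1 ∧ x.2 < y.2 ∧ T x < T y).card
    = (D.filter fun y => y.2 = x.2 ∧ x.1 < y.1 ∧ T y < T x).card

/-- The inversion number of a tableau on `D`: the number of pairs of entries `i < j`
with `i` in a strictly higher row and a different column than `j`. -/
def invT (D : Finset (ℕ × ℕ)) (T : ℕ × ℕ → ℕ) : ℕ :=
  ((D ×ˢ D).filter fun p => T p.1 < T p.2 ∧ p.2.1 < p.1.1 ∧ p.1.2 ≠ p.2.2).card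


/-- The tableau `T` on `D` is super-Yamanouchi: its reverse row reading word (right to
left along rows, from the bottom row up) is the identity `1, 2, …, |D|`; equivalently,
entries compare according to the reading order. -/
def IsSuperYT (D : Finset (ℕ × ℕ)) (T : ℕ × ℕ → ℕ) : Prop :=
  ∀ x ∈ D, ∀ y ∈ D, (T x < T y ↔ (x.1 < y.1 ∨ (x.1 = y.1 ∧ y.2 < x.2)))

/-- A standard balanced tableau has inversion number zero if and only if it is the
super-Yamanouchi tableau. -/
theorem invT_eq_zero_iff_superYamanouchi (n : ℕ) (w : Equiv.Perm (Fin n))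
    (T : ℕ × ℕ → ℕ) (hT : IsSBT (RotheD n w) T) :
    invT (RotheD n w) T = 0 ↔ IsSuperYT (RotheD n w) T := by
  obtain ⟨hinj, -, hbal⟩ := hT
  set D := RotheD n w with hD
  constructor
  · intro h0
    rw [invT, Finset.card_eq_zero, Finset.filter_eq_empty_iff] at h0
    have hstar : ∀ x ∈ D, ∀ y ∈ D, y.1 < x.1 → x.2 ≠ y.2 → ¬ T x < T y := by
      intro x hx y hy h1 h2 h3
      exact h0 (show (x, y) ∈ D ×ˢ D from Finset.mem_product.mpr ⟨hx, hy⟩) ⟨h3, h1, h2⟩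
    have hne : ∀ x ∈ D, ∀ y ∈ D, x.1 ≠ y.1 ∨ x.2 ≠ y.2 → T x ≠ T y := by
      intro x hx y hy hxy h
      have := hinj hx hy h
      rcases hxy with h1 | h1 <;> exact h1 (by rw [this])
    have hrow : ∀ x ∈ D, ∀ y ∈ D, x.1 < y.1 → T x < T y := by
      intro x hx y hy hlt
      by_contra hnot
      have hyx : T y < T x :=
        lt_of_le_of_ne (not_lt.mp hnot) (hne y hy x hx (Or.inl hlt.ne') )
      by_cases hc : x.2 = y.2
      · -- same column: use the balanced condition at x
        have hmem : y ∈ D.filter fun z => z.2 = x.2 ∧ x.1 < z.1 ∧ T z < T x :=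
          Finset.mem_filter.mpr ⟨hy, hc.symm, hlt, hyx⟩
        have hpos : 0 < (D.filter fun z => z.1 = x.1 ∧ x.2 < z.2 ∧ T x < T z).card := by
          rw [hbal x hx]
          exact Finset.card_pos.mpr ⟨y, hmem⟩
        obtain ⟨z, hz⟩ := Finset.card_pos.mp hpos
        obtain ⟨hzD, hz1, hz2, hz3⟩ := Finset.mem_filter.mp hz
        exact hstar y hy z hzD (hz1 ▸ hlt) (fun h => absurd (hc.symm ▸ h ▸ hz2) (lt_irrefl _))
          (hyx.trans hz3)
      · exact hstar y hy x hx hlt (fun h => hc h.symm) hyx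
    have hR0 : ∀ y ∈ D, (D.filter fun z => z.1 = y.1 ∧ y.2 < z.2 ∧ T y < T z).card = 0 := by
      intro y hy
      rw [hbal y hy, Finset.card_eq_zero, Finset.filter_eq_empty_iff]
      rintro z hz ⟨-, h1, h2⟩
      exact absurd (hrow y hy z hz h1) (not_lt.mpr h2.le)
    have hsame : ∀ x ∈ D, ∀ y ∈ D, x.1 = y.1 → y.2 < x.2 → T x < T y := by
      intro x hx y hy h1 h2
      by_contra hnot
      have hyx : T y < T x :=
        lt_of_le_of_ne (not_lt.mp hnot) (hne y hy x hx (Or.inr h2.ne))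
      have hmem : x ∈ D.filter fun z => z.1 = y.1 ∧ y.2 < z.2 ∧ T y < T z :=
        Finset.mem_filter.mpr ⟨hx, h1, h2, hyx⟩
      have h0' := hR0 y hy
      rw [Finset.card_eq_zero] at h0'
      rw [h0'] at hmem
      exact Finset.notMem_empty x hmem
    intro x hx y hy
    constructor
    · intro hT
      rcases lt_trichotomy x.1 y.1 with h | h | h
      · exact Or.inl h
      · rcases lt_trichotomy y.2 x.2 with h2 | h2 | h2
        · exact Or.inr ⟨h, h2⟩
        · exact absurd hT (by
            have : x = y := Prod.ext h h2.symm
            rw [this]; exact lt_irrefl _)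
        · exact absurd (hsame y hy x hx h.symm h2) (not_lt.mpr hT.le)
      · exact absurd (hrow y hy x hx h) (not_lt.mpr hT.le)
    · rintro (h | ⟨h1, h2⟩)
      · exact hrow x hx y hy h
      · exact hsame x hx y hy h1 h2
  · intro hY
    rw [invT, Finset.card_eq_zero, Finset.filter_eq_empty_iff]
    rintro p hp ⟨h1, h2, h3⟩
    obtain ⟨hpa, hpb⟩ := Finset.mem_product.mp hp
    rcases (hY p.1 hpa p.2 hpb).mp h1 with h | ⟨h, -⟩
    · exact absurd h (not_lt.mpr h2.le)
    · exact absurd h2 (not_lt.mpr h.le)
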